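/- arXiv:2302.09827 — 2 statements merged into one kernel-verified Lean document; each statement's English description precedes it below -/
import Mathlib

section
/- The volume entropy of the free group F_2 with respect to the generating set {g, g⁻¹, h, h⁻¹, g·h⁻¹, h·g⁻¹} equals ln 4. -/
def fgG : FreeGroup (Fin 2) := FreeGroup.of 0
def fgH : FreeGroup (Fin 2) := FreeGroup.of 1

/-- The non-standard symmetric generating set `{g, g⁻¹, h, h⁻¹, g·h⁻¹, h·g⁻¹}` of `F₂`. -/
def genS : Set (FreeGroup (Fin 2)) := {fgG, fgG⁻¹, fgH, fgH⁻¹, fgG * fgH⁻¹, fgH * fgG⁻¹}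

/-- Word length with respect to the generating set `genS`. -/
noncomputable def wlen (x : FreeGroup (Fin 2)) : ℕ :=
  sInf {n : ℕ | ∃ l : List (FreeGroup (Fin 2)),
    l.length = n ∧ (∀ y ∈ l, y ∈ genS) ∧ l.prod = x}

inductive L6 | a | A | b | B | c | C deriving DecidableEq

instance : Fintype L6 := ⟨⟨(([L6.a, L6.A, L6.b, L6.B, L6.c, L6.C] : List L6) : Multiset L6), by decide⟩, fun x => by cases x <;> decide⟩

open L6

def emb : L6 → FreeGroup (Fin 2)
| a => fgG | A => fgG⁻¹ | b => fgH | B => fgH⁻¹ | c => fgG * fgH⁻¹ | C => fgH * fgG⁻¹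

def spell : L6 → List (Fin 2 × Bool)
| a => [(0,true)] | A => [(0,false)] | b => [(1,true)] | B => [(1,false)]
| c => [(0,true),(1,false)] | C => [(1,true),(0,false)]

lemma emb_eq_mk (x : L6) : emb x = FreeGroup.mk (spell x) := by
  cases x <;>
    simp [emb, spell, fgG, fgH, FreeGroup.of, FreeGroup.inv_mk, FreeGroup.mul_mk, FreeGroup.invRev]

lemma emb_mem_genS (x : L6) : emb x ∈ genS := by
  cases x <;> simp [emb, genS]

/-- allowed-successor table -/
def gd : L6 → L6 → Bool
| a, y => y = a ∨ y = b ∨ y = c ∨ y = C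
| b, y => y = a ∨ y = b ∨ y = c ∨ y = C
| A, y => y = A ∨ y = b ∨ y = B ∨ y = C
| C, y => y = A ∨ y = b ∨ y = B ∨ y = C
| B, y => y = a ∨ y = A ∨ y = B ∨ y = c
| c, y => y = a ∨ y = A ∨ y = B ∨ y = c

def nxt : L6 → Fin 4 → L6
| a, 0 => a | a, 1 => b | a, 2 => c | a, 3 => C
| b, 0 => a | b, 1 => b | b, 2 => c | b, 3 => C
| A, 0 => A | A, 1 => b | A, 2 => B | A, 3 => C
| C, 0 => A | C, 1 => b | C, 2 => B | C, 3 => C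
| B, 0 => a | B, 1 => A | B, 2 => B | B, 3 => c
| c, 0 => a | c, 1 => A | c, 2 => B | c, 3 => c

def idx : L6 → L6 → Fin 4
| a, y => match y with | a => 0 | b => 1 | c => 2 | _ => 3
| b, y => match y with | a => 0 | b => 1 | c => 2 | _ => 3
| A, y => match y with | A => 0 | b => 1 | B => 2 | _ => 3
| C, y => match y with | A => 0 | b => 1 | B => 2 | _ => 3
| B, y => match y with | a => 0 | A => 1 | B => 2 | _ => 3
| c, y => match y with | a => 0 | A => 1 | B => 2 | _ => 3

lemma nxt_idx {x y : L6} (h : gd x y) : nxt x (idx x y) = y := by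
  revert h; cases x <;> cases y <;> decide

lemma nxt_gd (x : L6) (d : Fin 4) : gd x (nxt x d) := by
  cases x <;> fin_cases d <;> decide

lemma nxt_inj (x : L6) : Function.Injective (nxt x) := by
  cases x <;> decide

def word : L6 → List (Fin 4) → List (Fin 2 × Bool)
| z, [] => spell z
| z, d :: t => spell z ++ word (nxt z d) t

def encode : L6 → List (Fin 4) → List L6
| z, [] => [z]
| z, d :: t => z :: encode (nxt z d) t

lemma word_eq_append (z : L6) (t : List (Fin 4)) :
    ∃ r, word z t = spell z ++ r := by
  cases t with
  | nil => exact ⟨[], by simp [word]⟩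
  | cons d t => exact ⟨word (nxt z d) t, rfl⟩

lemma word_get0 (z : L6) (t : List (Fin 4)) :
    (word z t).head? = (spell z).head? := by
  obtain ⟨r, hr⟩ := word_eq_append z t
  rw [hr]; cases z <;> simp [spell]

lemma word_get1_c (t : List (Fin 4)) : (word c t)[1]? = some (1,false) := by
  obtain ⟨r, hr⟩ := word_eq_append c t
  rw [hr]; simp [spell]

lemma word_get1_C (t : List (Fin 4)) : (word C t)[1]? = some (0,false) := by
  obtain ⟨r, hr⟩ := word_eq_append C t
  rw [hr]; simp [spell]

lemma word_get1_a (t : List (Fin 4)) (v : Fin 2 × Bool) (h : (word a t)[1]? = some v) :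
    v.2 = true := by
  cases t with
  | nil => simp [word, spell] at h
  | cons d t =>
    have : (word a (d :: t))[1]? = (word (nxt a d) t).head? := by
      simp [word, spell, List.head?_eq_getElem?]
    rw [this, word_get0] at h
    fin_cases d <;> simp [nxt, spell] at h <;> simp [← h]

lemma word_get1_b (t : List (Fin 4)) (v : Fin 2 × Bool) (h : (word b t)[1]? = some v) :
    v.2 = true := by
  cases t with
  | nil => simp [word, spell] at h
  | cons d t =>
    have : (word b (d :: t))[1]? = (word (nxt b d) t).head? := by
      simp [word, spell, List.head?_eq_getElem?]
    rw [this, word_get0] at h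
    fin_cases d <;> simp [nxt, spell] at h <;> simp [← h]

lemma word_state {z z' : L6} {t t' : List (Fin 4)} (h : word z t = word z' t') : z = z' := by
  have h0 := congrArg List.head? h
  rw [word_get0, word_get0] at h0
  have h1 := congrArg (fun l => l[1]?) h
  cases z <;> cases z' <;> first
    | rfl
    | (exfalso; rw [word_get1_c] at h1; exact absurd (word_get1_a _ _ h1.symm) (by simp))
    | (exfalso; rw [word_get1_c] at h1; exact absurd (word_get1_a _ _ h1) (by simp))
    | (exfalso; rw [word_get1_C] at h1; exact absurd (word_get1_b _ _ h1.symm) (by simp))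
    | (exfalso; rw [word_get1_C] at h1; exact absurd (word_get1_b _ _ h1) (by simp))
    | (exfalso; simp [spell] at h0)

lemma word_inj : ∀ (t t' : List (Fin 4)) (z z' : L6), t.length = t'.length →
    word z t = word z' t' → z = z' ∧ t = t' := by
  intro t
  induction t with
  | nil =>
    intro t' z z' hl h
    cases t' with
    | nil => exact ⟨word_state h, rfl⟩
    | cons d t' => simp at hl
  | cons d t ih =>
    intro t' z z' hl h
    cases t' with
    | nil => simp at hl
    | cons d' t' =>
      have hz : z = z' := word_state h
      subst hz
      have h2 : word (nxt z d) t = word (nxt z d') t' := by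
        have := h
        simp only [word] at this
        exact List.append_cancel_left this
      obtain ⟨hzz, htt⟩ := ih t' _ _ (by simpa using hl) h2
      refine ⟨rfl, ?_⟩
      rw [htt, nxt_inj z hzz]

/-- non-cancelling adjacency of letters -/
def RR (p q : Fin 2 × Bool) : Prop := ¬(p.1 = q.1 ∧ p.2 = !q.2)

instance : DecidablePred fun pq : (Fin 2 × Bool) × (Fin 2 × Bool) => RR pq.1 pq.2 := by
  intro pq; unfold RR; infer_instance

lemma reduce_eq_self : ∀ {L : List (Fin 2 × Bool)}, List.Chain' RR L → FreeGroup.reduce L = L := by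
  intro L
  induction L with
  | nil => intro _; rfl
  | cons x l ih =>
    intro h
    have hl : FreeGroup.reduce l = l := ih h.tail
    rw [FreeGroup.reduce.cons, hl]
    cases l with
    | nil => rfl
    | cons y m =>
      have hxy : RR x y := List.isChain_cons_cons.mp h |>.1
      simp only
      rw [if_neg]
      exact fun hc => hxy hc

lemma chain'_spell (z : L6) : List.Chain' RR (spell z) := by
  cases z <;> simp [List.Chain', spell, RR]

lemma bdry {z w : L6} (h : gd z w) :
    ∀ p ∈ (spell z).getLast?, ∀ q ∈ (spell w).head?, RR p q := by
  revert h; cases z <;> cases w <;> intro h <;>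
    first
      | exact absurd h (by decide)
      | (intro p hp q hq; simp [spell] at hp hq; subst hp; subst hq; simp [RR])

lemma word_head? (z : L6) (t : List (Fin 4)) : (word z t).head? = (spell z).head? :=
  word_get0 z t

lemma chain'_word (z : L6) (t : List (Fin 4)) : List.Chain' RR (word z t) := by
  induction t generalizing z with
  | nil => exact chain'_spell z
  | cons d t ih =>
    show List.Chain' RR (spell z ++ word (nxt z d) t)
    rw [List.Chain', List.isChain_append]
    refine ⟨chain'_spell z, ih _, ?_⟩
    intro p hp q hq
    rw [word_head?] at hq
    exact bdry (nxt_gd z d) p hp q hq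

lemma encode_length (z : L6) (t : List (Fin 4)) : (encode z t).length = t.length + 1 := by
  induction t generalizing z with
  | nil => rfl
  | cons d t ih => simp [encode, ih]

lemma encode_prod (z : L6) (t : List (Fin 4)) :
    ((encode z t).map emb).prod = FreeGroup.mk (word z t) := by
  induction t generalizing z with
  | nil => simp [encode, word, emb_eq_mk]
  | cons d t ih =>
    show (emb z * ((encode (nxt z d) t).map emb).prod) = _
    rw [ih, emb_eq_mk, FreeGroup.mul_mk]
    rfl

lemma encode_toWord (z : L6) (t : List (Fin 4)) :
    (((encode z t).map emb).prod).toWord = word z t := by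
  rw [encode_prod, FreeGroup.toWord_mk, reduce_eq_self (chain'_word z t)]

lemma encode_prod_inj {z z' : L6} {t t' : List (Fin 4)} (hl : t.length = t'.length)
    (h : ((encode z t).map emb).prod = ((encode z' t').map emb).prod) : z = z' ∧ t = t' := by
  have := congrArg FreeGroup.toWord h
  rw [encode_toWord, encode_toWord] at this
  exact word_inj t t' z z' hl this

/-- pair status: `none` = good pair; `some none` = product is 1; `some (some z)` = product is `emb z` -/
def pr : L6 → L6 → Option (Option L6)
| a, A => some none | a, B => some (some c)
| A, a => some none | A, c => some (some B)
| b, B => some none | b, A => some (some C)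
| B, b => some none | B, C => some (some A)
| c, b => some (some a) | c, C => some none
| C, a => some (some b) | C, c => some none
| _, _ => none

lemma pr_good {x y : L6} (h : pr x y = none) : gd x y := by
  revert h; cases x <;> cases y <;> decide

lemma pr_cancel {x y : L6} (h : pr x y = some none) : emb x * emb y = 1 := by
  revert h; cases x <;> cases y <;> decide

lemma pr_single {x y z : L6} (h : pr x y = some (some z)) : emb x * emb y = emb z := by
  revert h; cases x <;> cases y <;> intro h <;> simp [pr] at h <;> (subst h; decide)

def ins : L6 → List L6 → List L6
| x, [] => [x]
| x, y :: l => match pr x y with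
  | none => x :: y :: l
  | some none => l
  | some (some z) => ins z l

lemma ins_prod (x : L6) (l : List L6) :
    ((ins x l).map emb).prod = emb x * (l.map emb).prod := by
  induction l generalizing x with
  | nil => simp [ins]
  | cons y l ih =>
    show (((match pr x y with
        | none => x :: y :: l
        | some none => l
        | some (some z) => ins z l) : List L6).map emb).prod = _
    rcases hp : pr x y with _ | _ | z <;> dsimp only
    · simp [mul_assoc]
    · simp [← mul_assoc, pr_cancel hp]
    · simp [ih, ← mul_assoc, pr_single hp]

lemma ins_length (x : L6) (l : List L6) : (ins x l).length ≤ l.length + 1 := by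
  induction l generalizing x with
  | nil => simp [ins]
  | cons y l ih =>
    show (((match pr x y with
        | none => x :: y :: l
        | some none => l
        | some (some z) => ins z l) : List L6)).length ≤ _
    rcases hp : pr x y with _ | _ | z <;> dsimp only <;> simp
    · exact Nat.le_succ_of_le (Nat.le_succ _)
    · exact Nat.le_succ_of_le (ih z)

def gdP (x y : L6) : Prop := gd x y = true

lemma ins_chain (x : L6) (l : List L6) (h : List.Chain' gdP l) :
    List.Chain' gdP (ins x l) := by
  induction l generalizing x with
  | nil => simp [List.Chain', ins]
  | cons y l ih =>
    show List.Chain' gdP ((match pr x y with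
        | none => x :: y :: l
        | some none => l
        | some (some z) => ins z l) : List L6)
    rcases hp : pr x y with _ | _ | z <;> dsimp only
    · exact List.isChain_cons_cons.mpr ⟨pr_good hp, h⟩
    · exact h.tail
    · exact ih z h.tail

def nf (l : List L6) : List L6 := l.foldr ins []

lemma nf_prod (l : List L6) : ((nf l).map emb).prod = (l.map emb).prod := by
  induction l with
  | nil => rfl
  | cons x l ih => show ((ins x (nf l)).map emb).prod = _; rw [ins_prod]; simp [ih]

lemma nf_length (l : List L6) : (nf l).length ≤ l.length := by
  induction l with
  | nil => exact le_refl _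
  | cons x l ih =>
    calc (ins x (nf l)).length ≤ (nf l).length + 1 := ins_length _ _
    _ ≤ l.length + 1 := by omega

lemma nf_chain (l : List L6) : List.Chain' gdP (nf l) := by
  induction l with
  | nil => exact List.isChain_nil
  | cons x l ih => exact ins_chain x _ ih

lemma exists_L6_list (x : FreeGroup (Fin 2)) : ∃ l : List L6, (l.map emb).prod = x := by
  induction x using FreeGroup.induction_on with
  | C1 => exact ⟨[], rfl⟩
  | of i =>
    fin_cases i
    · exact ⟨[a], by simp [emb, fgG]⟩
    · exact ⟨[b], by simp [emb, fgH]⟩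
  | inv_of i _ =>
    fin_cases i
    · exact ⟨[A], by simp [emb, fgG]⟩
    · exact ⟨[B], by simp [emb, fgH]⟩
  | mul x y hx hy =>
    obtain ⟨l1, h1⟩ := hx
    obtain ⟨l2, h2⟩ := hy
    exact ⟨l1 ++ l2, by simp [h1, h2]⟩

lemma wlen_set_nonempty (x : FreeGroup (Fin 2)) :
    {n : ℕ | ∃ l : List (FreeGroup (Fin 2)),
      l.length = n ∧ (∀ y ∈ l, y ∈ genS) ∧ l.prod = x}.Nonempty := by
  obtain ⟨l, hl⟩ := exists_L6_list x
  exact ⟨(l.map emb).length, l.map emb, rfl, by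
    intro y hy
    obtain ⟨z, _, rfl⟩ := List.mem_map.mp hy
    exact emb_mem_genS z, hl⟩

lemma wlen_le_of_list {x : FreeGroup (Fin 2)} (l : List L6) (hp : (l.map emb).prod = x) :
    wlen x ≤ l.length := by
  apply Nat.sInf_le
  exact ⟨l.map emb, by simp, by
    intro y hy
    obtain ⟨z, _, rfl⟩ := List.mem_map.mp hy
    exact emb_mem_genS z, hp⟩

lemma genS_emb {y : FreeGroup (Fin 2)} (hy : y ∈ genS) : ∃ z : L6, emb z = y := by
  rcases hy with rfl | rfl | rfl | rfl | rfl | rfl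
  exacts [⟨a, rfl⟩, ⟨A, rfl⟩, ⟨b, rfl⟩, ⟨B, rfl⟩, ⟨c, rfl⟩, ⟨C, rfl⟩]

lemma list_lift {lw : List (FreeGroup (Fin 2))} (h : ∀ y ∈ lw, y ∈ genS) :
    ∃ m : List L6, m.map emb = lw := by
  induction lw with
  | nil => exact ⟨[], rfl⟩
  | cons y lw ih =>
    obtain ⟨m, hm⟩ := ih (fun z hz => h z (List.mem_cons_of_mem _ hz))
    obtain ⟨z, hz⟩ := genS_emb (h y List.mem_cons_self)
    exact ⟨z :: m, by simp [hm, hz]⟩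

/-- every element of the ball of radius n is the product of a good chain of length ≤ n -/
lemma wlen_rep {x : FreeGroup (Fin 2)} {n : ℕ} (h : wlen x ≤ n) :
    ∃ m : List L6, List.Chain' gdP m ∧ m.length ≤ n ∧ (m.map emb).prod = x := by
  have hmem := Nat.sInf_mem (wlen_set_nonempty x)
  obtain ⟨lw, hlen, hmemS, hprod⟩ := hmem
  obtain ⟨m0, hm0⟩ := list_lift hmemS
  refine ⟨nf m0, nf_chain m0, ?_, by rw [nf_prod, hm0, hprod]⟩
  calc (nf m0).length ≤ m0.length := nf_length m0
  _ = lw.length := by rw [← hm0]; simp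
  _ = wlen x := hlen
  _ ≤ n := h

lemma encode_head (z : L6) (t : List (Fin 4)) : ∃ r, encode z t = z :: r := by
  cases t with
  | nil => exact ⟨[], rfl⟩
  | cons d t => exact ⟨encode (nxt z d) t, rfl⟩

lemma chain_encode : ∀ m : List L6, m ≠ [] → List.Chain' gdP m →
    ∃ z t, encode z t = m ∧ t.length + 1 = m.length := by
  intro m
  induction m with
  | nil => intro h; exact absurd rfl h
  | cons x l ih =>
    intro _ hc
    cases l with
    | nil => exact ⟨x, [], rfl, rfl⟩
    | cons y l' =>
      obtain ⟨hgd, hc'⟩ := List.isChain_cons_cons.mp hc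
      obtain ⟨z, t, henc, hlen⟩ := ih (by simp) hc'
      obtain ⟨r, hr⟩ := encode_head z t
      have hz : z = y := by rw [hr] at henc; exact (List.cons_eq_cons.mp henc).1
      subst hz
      refine ⟨x, idx x z :: t, ?_, by simp [← hlen]⟩
      show x :: encode (nxt x (idx x z)) t = x :: z :: l'
      rw [nxt_idx hgd, henc]

def FF (p : L6 × List (Fin 4)) : FreeGroup (Fin 2) := ((encode p.1 p.2).map emb).prod

def DD (k : ℕ) : Set (L6 × List (Fin 4)) := {p | p.2.length ≤ k}

lemma DD_finite (k : ℕ) : (DD k).Finite := by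
  have : DD k = (Set.univ : Set L6) ×ˢ {t : List (Fin 4) | t.length ≤ k} := by
    ext p; simp [DD]
  rw [this]
  exact (Set.finite_univ).prod (List.finite_length_le _ _)

lemma ball_subset (n : ℕ) :
    {x : FreeGroup (Fin 2) | wlen x ≤ n} ⊆ insert 1 (FF '' DD (n - 1)) := by
  intro x hx
  obtain ⟨m, hchain, hlen, hprod⟩ := wlen_rep hx
  cases m with
  | nil => left; exact hprod.symm
  | cons w l =>
    obtain ⟨z, t, henc, hlen2⟩ := chain_encode (w :: l) (by simp) hchain
    right
    refine ⟨(z, t), ?_, by rw [FF, henc, hprod]⟩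
    show t.length ≤ n - 1
    simp only [List.length_cons] at hlen2 hlen
    omega

lemma ball_finite (n : ℕ) : {x : FreeGroup (Fin 2) | wlen x ≤ n}.Finite :=
  Set.Finite.subset (((DD_finite (n-1)).image FF).insert 1) (ball_subset n)

lemma DD_ncard (k : ℕ) : (DD k).ncard ≤ 6 * ((k+1) * 4^k) := by
  have h := Set.ncard_le_ncard_of_injOn (s := DD k) (t := Set.univ)
    (fun p : L6 × List (Fin 4) =>
      ((p.1, ⟨min p.2.length k, by omega⟩, fun i => p.2.getD i 0) : L6 × Fin (k+1) × (Fin k → Fin 4)))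
    (fun p _ => Set.mem_univ _) ?_ Set.finite_univ
  · calc (DD k).ncard ≤ _ := h
    _ = Fintype.card (L6 × Fin (k+1) × (Fin k → Fin 4)) := by
        rw [Set.ncard_univ, Nat.card_eq_fintype_card]
    _ = 6 * ((k+1) * 4^k) := by
        simp only [Fintype.card_prod, Fintype.card_fun, Fintype.card_fin]
        norm_num [show Fintype.card L6 = 6 from rfl]
  · rintro ⟨x, t⟩ ht ⟨x', t'⟩ ht' heq
    simp only [Prod.mk.injEq] at heq
    obtain ⟨h1, h2, h3⟩ := heq
    simp only [DD, Set.mem_setOf_eq] at ht ht'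
    have hlen : t.length = t'.length := by
      simp only [Fin.mk.injEq] at h2
      omega
    have : t = t' := by
      apply List.ext_getElem hlen
      intro i hi hi'
      have hik : i < k := lt_of_lt_of_le hi ht
      have := congrFun h3 ⟨i, hik⟩
      simpa [List.getD_eq_getElem?_getD, List.getElem?_eq_getElem, hi, hi'] using this
    exact Prod.ext h1 this

lemma ball_ncard_upper (n : ℕ) :
    {x : FreeGroup (Fin 2) | wlen x ≤ n}.ncard ≤ 1 + 6 * ((n - 1 + 1) * 4^(n-1)) := by
  calc {x : FreeGroup (Fin 2) | wlen x ≤ n}.ncard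
      ≤ (insert 1 (FF '' DD (n - 1))).ncard :=
        Set.ncard_le_ncard (ball_subset n) (((DD_finite (n-1)).image FF).insert 1)
    _ ≤ (FF '' DD (n - 1)).ncard + 1 := Set.ncard_insert_le _ _
    _ ≤ (DD (n-1)).ncard + 1 := by
        have := Set.ncard_image_le (f := FF) (s := DD (n-1)) (DD_finite (n-1))
        omega
    _ ≤ 1 + 6 * ((n - 1 + 1) * 4^(n-1)) := by have := DD_ncard (n-1); omega

lemma ball_ncard_lower (n : ℕ) (hn : 1 ≤ n) :
    4^(n-1) ≤ {x : FreeGroup (Fin 2) | wlen x ≤ n}.ncard := by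
  have h := Set.ncard_le_ncard_of_injOn
    (fun f : Fin (n-1) → Fin 4 => ((encode L6.a (List.ofFn f)).map emb).prod)
    (s := Set.univ) ?_ ?_ (ball_finite n)
  · calc (4:ℕ)^(n-1) = Fintype.card (Fin (n-1) → Fin 4) := by simp
    _ = (Set.univ : Set (Fin (n-1) → Fin 4)).ncard := by
        rw [Set.ncard_univ, Nat.card_eq_fintype_card]
    _ ≤ _ := h
  · intro f _
    show wlen _ ≤ n
    calc wlen _ ≤ (encode L6.a (List.ofFn f)).length :=
          wlen_le_of_list _ rfl
    _ = (n-1) + 1 := by rw [encode_length]; simp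
    _ ≤ n := by omega
  · intro f _ f' _ heq
    have := encode_prod_inj (by simp) heq
    exact List.ofFn_injective this.2

open Filter Real

/-- The volume entropy of `F₂` with respect to the generating set
`{g, g⁻¹, h, h⁻¹, g·h⁻¹, h·g⁻¹}` equals `ln 4`. -/
theorem freeGroup_two_volume_entropy :
    Filter.Tendsto
      (fun n : ℕ => Real.log (Set.ncard {x : FreeGroup (Fin 2) | wlen x ≤ n}) / n)
      Filter.atTop (nhds (Real.log 4)) := by
  have hlo : Tendsto (fun n : ℕ => (1 - 1/(n:ℝ)) * Real.log 4) atTop (nhds (Real.log 4)) := by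
    have h1 : Tendsto (fun n : ℕ => 1 - 1/(n:ℝ)) atTop (nhds 1) := by
      simpa using (tendsto_const_nhds (x := (1:ℝ))).sub tendsto_one_div_atTop_nhds_zero_nat
    simpa using h1.mul_const (Real.log 4)
  have hhi : Tendsto (fun n : ℕ => Real.log 2 / n + Real.log n / n + Real.log 4)
      atTop (nhds (Real.log 4)) := by
    have t1 : Tendsto (fun n : ℕ => Real.log 2 / (n:ℝ)) atTop (nhds 0) :=
      tendsto_const_div_atTop_nhds_zero_nat _
    have t2 : Tendsto (fun n : ℕ => Real.log (n:ℝ) / (n:ℝ)) atTop (nhds 0) :=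
      (Real.isLittleO_log_id_atTop.tendsto_div_nhds_zero).comp tendsto_natCast_atTop_atTop
    simpa using (t1.add t2).add (tendsto_const_nhds (x := Real.log 4))
  apply tendsto_of_tendsto_of_tendsto_of_le_of_le' hlo hhi
  · -- lower bound
    filter_upwards [Filter.eventually_ge_atTop 1] with n hn
    set N := Set.ncard {x : FreeGroup (Fin 2) | wlen x ≤ n} with hN
    have hlow : 4^(n-1) ≤ N := ball_ncard_lower n hn
    have hn0 : (0:ℝ) < n := by exact_mod_cast hn
    have hcast : ((4:ℝ))^(n-1) ≤ (N : ℝ) := by exact_mod_cast hlow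
    have hlog : ((n:ℝ) - 1) * Real.log 4 ≤ Real.log N := by
      have h1 : Real.log ((4:ℝ)^(n-1)) ≤ Real.log N :=
        Real.log_le_log (by positivity) hcast
      rw [Real.log_pow] at h1
      have : ((n-1 : ℕ) : ℝ) = (n:ℝ) - 1 := by
        push_cast [hn]; ring
      rwa [this] at h1
    rw [show (1 - 1/(n:ℝ)) * Real.log 4 = (((n:ℝ)-1) * Real.log 4)/n by field_simp]
    exact div_le_div_of_nonneg_right hlog (le_of_lt hn0) |>.trans_eq rfl
  · -- upper bound
    filter_upwards [Filter.eventually_ge_atTop 1] with n hn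
    set N := Set.ncard {x : FreeGroup (Fin 2) | wlen x ≤ n} with hN
    obtain ⟨m, rfl⟩ : ∃ m, n = m + 1 := ⟨n - 1, by omega⟩
    have hup : N ≤ 2 * (m+1) * 4^(m+1) := by
      have h1 : N ≤ 1 + 6 * ((m+1) * 4^m) := by
        have := ball_ncard_upper (m+1); simpa using this
      have h2 : 1 ≤ 4^m := Nat.one_le_pow _ _ (by norm_num)
      calc N ≤ 1 + 6 * ((m+1) * 4^m) := h1
      _ ≤ 2 * (m+1) * 4^(m+1) := by rw [pow_succ]; nlinarith
    have hNpos : 0 < N := lt_of_lt_of_le (Nat.pow_pos (by norm_num) : 0 < 4 ^ ((m+1)-1)) (ball_ncard_lower (m+1) (by omega))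
    have hn0 : (0:ℝ) < ((m+1 : ℕ):ℝ) := by positivity
    have hcast : (N:ℝ) ≤ 2 * ((m+1:ℕ):ℝ) * 4^(m+1) := by exact_mod_cast hup
    have hlog : Real.log N ≤ Real.log 2 + Real.log ((m+1:ℕ):ℝ) + ((m+1:ℕ):ℝ) * Real.log 4 := by
      have h1 : Real.log N ≤ Real.log (2 * ((m+1:ℕ):ℝ) * 4^(m+1)) :=
        (Real.log_le_log_iff (by exact_mod_cast hNpos) (by positivity)).mpr hcast
      rw [Real.log_mul (by positivity) (by positivity), Real.log_mul (by norm_num) (by positivity),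
        Real.log_pow] at h1
      simpa using h1
    rw [div_le_iff₀ hn0] at *
    calc Real.log N ≤ Real.log 2 + Real.log ((m+1:ℕ):ℝ) + ((m+1:ℕ):ℝ) * Real.log 4 := hlog
    _ = (Real.log 2 / ((m+1:ℕ):ℝ) + Real.log ((m+1:ℕ):ℝ) / ((m+1:ℕ):ℝ) + Real.log 4) * ((m+1:ℕ):ℝ) := by
        field_simp
end

section
/- For the free group F_2 with generating set {g, g⁻¹, h, h⁻¹, g·h⁻¹, h·g⁻¹}, the Poincaré series Σ_{x ∈ F_2} e^{-s|x|} converges if and only if s > ln 4. -/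
namespace FPaux

abbrev G2 := FreeGroup (Fin 2)

def letterWord : Fin 6 → List (Fin 2 × Bool)
  | 0 => [(0, true)]
  | 1 => [(0, false)]
  | 2 => [(1, true)]
  | 3 => [(1, false)]
  | 4 => [(0, true), (1, false)]
  | 5 => [(1, true), (0, false)]

def ev (i : Fin 6) : G2 := FreeGroup.mk (letterWord i)

def nxt : Fin 6 → Fin 4 → Fin 6
  | 0 => ![0, 2, 4, 5]
  | 1 => ![1, 2, 3, 5]
  | 2 => ![0, 2, 4, 5]
  | 3 => ![0, 1, 3, 4]
  | 4 => ![0, 1, 3, 4]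
  | 5 => ![1, 2, 3, 5]

def R (i j : Fin 6) : Prop := ∃ k, nxt i k = j

instance : DecidableRel R := fun _ _ => Fintype.decidableExistsFintype

lemma ev_mem_genS (i : Fin 6) : ev i ∈ genS := by
  have h0 : ev 0 = fgG := by decide
  have h1 : ev 1 = fgG⁻¹ := by decide
  have h2 : ev 2 = fgH := by decide
  have h3 : ev 3 = fgH⁻¹ := by decide
  have h4 : ev 4 = fgG * fgH⁻¹ := by decide
  have h5 : ev 5 = fgH * fgG⁻¹ := by decide
  fin_cases i <;> simp only [genS, Set.mem_insert_iff, Set.mem_singleton_iff] <;> tauto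

lemma genS_eq_ev {y : G2} (hy : y ∈ genS) : ∃ i, ev i = y := by
  have h0 : ev 0 = fgG := by decide
  have h1 : ev 1 = fgG⁻¹ := by decide
  have h2 : ev 2 = fgH := by decide
  have h3 : ev 3 = fgH⁻¹ := by decide
  have h4 : ev 4 = fgG * fgH⁻¹ := by decide
  have h5 : ev 5 = fgH * fgG⁻¹ := by decide
  simp only [genS, Set.mem_insert_iff, Set.mem_singleton_iff] at hy
  rcases hy with h|h|h|h|h|h
  exacts [⟨0, by rw [h0, h]⟩, ⟨1, by rw [h1, h]⟩, ⟨2, by rw [h2, h]⟩,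
    ⟨3, by rw [h3, h]⟩, ⟨4, by rw [h4, h]⟩, ⟨5, by rw [h5, h]⟩]

lemma forbidden_prod : ∀ i j : Fin 6, ¬ R i j →
    ev i * ev j = 1 ∨ ∃ k, ev i * ev j = ev k := by decide

/-! ### Reduced words -/

def Rd (p q : (Fin 2) × Bool) : Prop := ¬ (p.1 = q.1 ∧ p.2 = !q.2)

instance : DecidableRel Rd := fun _ _ => instDecidableNot

lemma reduce_eq_self : ∀ l : List ((Fin 2) × Bool), List.Chain' Rd l → FreeGroup.reduce l = l := by
  intro l hl
  induction l with
  | nil => rfl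
  | cons x t ih =>
    have ht : FreeGroup.reduce t = t := ih hl.tail
    rw [FreeGroup.reduce.cons, ht]
    cases t with
    | nil => rfl
    | cons y u =>
      have hxy : Rd x y := (List.isChain_cons_cons.mp hl).1
      simp only [Rd] at hxy
      simp [hxy]

lemma lw_ne_nil : ∀ j, letterWord j ≠ [] := by decide

lemma lw_chain : ∀ j, List.Chain' Rd (letterWord j) := by
  intro j
  fin_cases j <;> simp [letterWord, List.Chain', List.isChain_pair, List.isChain_singleton] <;> decide

lemma lw_boundary : ∀ i j, R i j →
    ∀ x ∈ (letterWord i).getLast?, ∀ y ∈ (letterWord j).head?, Rd x y := by decide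

def jw (w : List (Fin 6)) : List (Fin 2 × Bool) := (w.map letterWord).flatten

lemma jw_nil : jw [] = [] := rfl
lemma jw_cons (i : Fin 6) (t : List (Fin 6)) : jw (i :: t) = letterWord i ++ jw t := rfl

lemma jw_chain : ∀ w : List (Fin 6), List.Chain' R w → List.Chain' Rd (jw w) := by
  intro w hw
  induction w with
  | nil => simp [jw, List.Chain']
  | cons i t ih =>
    rw [jw_cons]; unfold List.Chain'; rw [List.isChain_append]
    refine ⟨lw_chain i, ih hw.tail, ?_⟩
    cases t with
    | nil => simp [jw]
    | cons j u =>
      rw [jw_cons, List.head?_append_of_ne_nil _ (lw_ne_nil j)]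
      exact lw_boundary i j (List.isChain_cons_cons.mp hw).1

lemma lw_head_eq_3 : ∀ k, (letterWord k).head? = some ((1:Fin 2), false) → k = 3 := by decide
lemma lw_head_eq_1 : ∀ k, (letterWord k).head? = some ((0:Fin 2), false) → k = 1 := by decide

lemma jw_head (k : Fin 6) (t : List (Fin 6)) : (jw (k :: t)).head? = (letterWord k).head? := by
  rw [jw_cons, List.head?_append_of_ne_nil _ (lw_ne_nil k)]

lemma head_cases : ∀ i j : Fin 6, (letterWord i).head? = (letterWord j).head? →
    i = j ∨ (i = 0 ∧ j = 4) ∨ (i = 4 ∧ j = 0) ∨ (i = 2 ∧ j = 5) ∨ (i = 5 ∧ j = 2) := by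
  decide

lemma case_asym (i j : Fin 6) (p q : Fin 2 × Bool) (hi : letterWord i = [p])
    (hj : letterWord j = [p, q]) (t1 t2 : List (Fin 6)) (h1 : List.Chain' R (i :: t1))
    (h : letterWord i ++ jw t1 = letterWord j ++ jw t2)
    (hk : ∀ k, (letterWord k).head? = some q → ¬ R i k) : False := by
  rw [hi, hj] at h
  simp only [List.cons_append, List.nil_append, List.cons.injEq, true_and] at h
  cases t1 with
  | nil => simp [jw] at h
  | cons k t1' =>
    have hh : (jw (k :: t1')).head? = some q := by rw [h]; rfl
    rw [jw_head] at hh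
    exact hk k hh (List.isChain_cons_cons.mp h1).1

lemma parse_inj : ∀ w1 w2 : List (Fin 6), List.Chain' R w1 → List.Chain' R w2 →
    jw w1 = jw w2 → w1 = w2 := by
  intro w1
  induction w1 with
  | nil =>
    intro w2 _ _ h
    cases w2 with
    | nil => rfl
    | cons j t =>
      rw [jw_nil, jw_cons] at h
      exact absurd h.symm (by simp [lw_ne_nil j])
  | cons i t1 ih =>
    intro w2 h1 h2 h
    cases w2 with
    | nil =>
      rw [jw_nil, jw_cons] at h
      exact absurd h (by simp [lw_ne_nil i])
    | cons j t2 =>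
      rcases eq_or_ne i j with rfl | hij
      · rw [jw_cons, jw_cons, List.append_cancel_left_eq] at h
        rw [ih t2 h1.tail h2.tail h]
      · exfalso
        rw [jw_cons, jw_cons] at h
        have hhd : (letterWord i).head? = (letterWord j).head? := by
          rw [← List.head?_append_of_ne_nil (letterWord i) (lw_ne_nil i),
            ← List.head?_append_of_ne_nil (letterWord j) (lw_ne_nil j), h]
        rcases head_cases i j hhd with rfl | ⟨rfl, rfl⟩ | ⟨rfl, rfl⟩ | ⟨rfl, rfl⟩ | ⟨rfl, rfl⟩
        · exact hij rfl
        · exact case_asym 0 4 (0,true) (1,false) rfl rfl t1 t2 h1 h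
            (fun k hk => by rw [lw_head_eq_3 k hk]; decide)
        · exact case_asym 0 4 (0,true) (1,false) rfl rfl t2 t1 h2 h.symm
            (fun k hk => by rw [lw_head_eq_3 k hk]; decide)
        · exact case_asym 2 5 (1,true) (0,false) rfl rfl t1 t2 h1 h
            (fun k hk => by rw [lw_head_eq_1 k hk]; decide)
        · exact case_asym 2 5 (1,true) (0,false) rfl rfl t2 t1 h2 h.symm
            (fun k hk => by rw [lw_head_eq_1 k hk]; decide)

/-! ### Products of admissible words -/

lemma prod_eq : ∀ w : List (Fin 6), (w.map ev).prod = FreeGroup.mk (jw w) := by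
  intro w
  induction w with
  | nil => rw [List.map_nil, List.prod_nil, jw_nil, FreeGroup.one_eq_mk]
  | cons i t ih =>
    rw [List.map_cons, List.prod_cons, ih, jw_cons, ev, FreeGroup.mul_mk]

lemma toWord_prod (w : List (Fin 6)) (hw : List.Chain' R w) :
    ((w.map ev).prod).toWord = jw w := by
  rw [prod_eq, FreeGroup.toWord_mk, reduce_eq_self _ (jw_chain w hw)]

lemma prod_inj {w1 w2 : List (Fin 6)} (h1 : List.Chain' R w1) (h2 : List.Chain' R w2)
    (h : (w1.map ev).prod = (w2.map ev).prod) : w1 = w2 :=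
  parse_inj _ _ h1 h2 (by rw [← toWord_prod w1 h1, ← toWord_prod w2 h2, h])

/-! ### Encoding and decoding of admissible words -/

def decode : Fin 6 → List (Fin 4) → List (Fin 6)
  | i, [] => [i]
  | i, k :: ks => i :: decode (nxt i k) ks

lemma decode_length : ∀ (ks : List (Fin 4)) (i : Fin 6), (decode i ks).length = ks.length + 1 := by
  intro ks
  induction ks with
  | nil => intro i; rfl
  | cons k t ih => intro i; simp [decode, ih]

lemma decode_head : ∀ (i : Fin 6) (ks : List (Fin 4)), (decode i ks).head? = some i := by
  intro i ks; cases ks <;> rfl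

lemma decode_chain : ∀ (ks : List (Fin 4)) (i : Fin 6), List.Chain' R (decode i ks) := by
  intro ks
  induction ks with
  | nil => intro i; simp [decode, List.Chain']
  | cons k t ih =>
    intro i
    rw [decode]; unfold List.Chain'; rw [List.isChain_cons]
    refine ⟨?_, ih _⟩
    intro y hy
    rw [decode_head] at hy
    rw [Option.mem_some_iff] at hy
    subst hy
    exact ⟨k, rfl⟩

lemma nxt_inj : ∀ (i : Fin 6) (k k' : Fin 4), nxt i k = nxt i k' → k = k' := by decide

lemma decode_inj : ∀ (ks ks' : List (Fin 4)) (i i' : Fin 6),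
    decode i ks = decode i' ks' → i = i' ∧ ks = ks' := by
  intro ks
  induction ks with
  | nil =>
    intro ks' i i' h
    cases ks' with
    | nil => simp [decode] at h; exact ⟨h, rfl⟩
    | cons k' t' =>
      exfalso
      have := congrArg List.length h
      simp [decode, decode_length] at this
  | cons k t ih =>
    intro ks' i i' h
    cases ks' with
    | nil =>
      exfalso
      have := congrArg List.length h
      simp [decode, decode_length] at this
    | cons k' t' =>
      rw [decode, decode, List.cons.injEq] at h
      obtain ⟨rfl, h2⟩ := h
      obtain ⟨hn, rfl⟩ := ih t' _ _ h2
      rw [nxt_inj _ _ _ hn]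
      exact ⟨rfl, rfl⟩

lemma encode_exists : ∀ w : List (Fin 6), List.Chain' R w → w ≠ [] →
    ∃ i ks, decode i ks = w := by
  intro w
  induction w with
  | nil => intro _ h; exact absurd rfl h
  | cons i t ih =>
    intro hc _
    cases t with
    | nil => exact ⟨i, [], rfl⟩
    | cons j u =>
      obtain ⟨i', ks, hik⟩ := ih hc.tail (by simp)
      have hi' : i' = j := by
        have := congrArg List.head? hik
        rw [decode_head] at this
        simpa using this
      obtain ⟨k, hk⟩ := (List.isChain_cons_cons.mp hc).1
      subst hi'
      refine ⟨i, k :: ks, ?_⟩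
      rw [decode, hk, hik]

/-! ### The finsets of products of admissible words -/

def Pm (m : ℕ) (p : Fin 6 × (Fin m → Fin 4)) : G2 :=
  ((decode p.1 (List.ofFn p.2)).map ev).prod

lemma Pm_inj (m : ℕ) : Function.Injective (Pm m) := by
  rintro ⟨i, f⟩ ⟨j, g⟩ h
  have hd := prod_inj (decode_chain _ _) (decode_chain _ _) h
  obtain ⟨hij, hfg⟩ := decode_inj _ _ _ _ hd
  simp only [Prod.mk.injEq]
  exact ⟨hij, List.ofFn_injective hfg⟩

def D (m : ℕ) : Finset G2 := Finset.image (Pm m) Finset.univ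

lemma card_D (m : ℕ) : (D m).card = 6 * 4 ^ m := by
  rw [D, Finset.card_image_of_injective _ (Pm_inj m), Finset.card_univ]
  simp [Fintype.card_fun]

/-! ### Basic facts about `wlen` -/

lemma wlen_le {x : G2} (l : List G2) (hl : ∀ y ∈ l, y ∈ genS) (hp : l.prod = x) :
    wlen x ≤ l.length :=
  Nat.sInf_le ⟨l, rfl, hl, hp⟩

lemma exists_list (x : G2) : ∃ l : List G2, (∀ y ∈ l, y ∈ genS) ∧ l.prod = x := by
  induction x using FreeGroup.induction_on with
  | C1 => exact ⟨[], by simp, rfl⟩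
  | of z =>
    have hz : (pure z : G2) = FreeGroup.of z := rfl
    fin_cases z
    · exact ⟨[fgG], by simp [genS], by simp [fgG]⟩
    · exact ⟨[fgH], by simp [genS], by simp [fgH]⟩
  | inv_of z _ =>
    have hz : (pure z : G2) = FreeGroup.of z := rfl
    fin_cases z
    · exact ⟨[fgG⁻¹], by simp [genS], by simp [fgG]⟩
    · exact ⟨[fgH⁻¹], by simp [genS], by simp [fgH]⟩
  | mul a b iha ihb =>
    obtain ⟨la, hla, hpa⟩ := iha
    obtain ⟨lb, hlb, hpb⟩ := ihb
    refine ⟨la ++ lb, ?_, by rw [List.prod_append, hpa, hpb]⟩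
    intro y hy
    rcases List.mem_append.mp hy with h | h
    exacts [hla y h, hlb y h]

lemma wlen_spec (x : G2) : ∃ l : List G2,
    l.length = wlen x ∧ (∀ y ∈ l, y ∈ genS) ∧ l.prod = x := by
  have hne : {n : ℕ | ∃ l : List G2,
      l.length = n ∧ (∀ y ∈ l, y ∈ genS) ∧ l.prod = x}.Nonempty := by
    obtain ⟨l, h1, h2⟩ := exists_list x
    exact ⟨l.length, l, rfl, h1, h2⟩
  exact Nat.sInf_mem hne

lemma shorten : ∀ w : List (Fin 6), ¬ List.Chain' R w →
    ∃ w' : List (Fin 6), w'.length < w.length ∧ (w'.map ev).prod = (w.map ev).prod := by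
  intro w
  induction w with
  | nil => intro h; exact absurd List.isChain_nil h
  | cons i t ih =>
    intro h
    cases t with
    | nil => exact absurd (List.isChain_singleton i) h
    | cons j u =>
      unfold List.Chain' at h; rw [List.isChain_cons_cons] at h
      push_neg at h
      by_cases hij : R i j
      · obtain ⟨w', hlen, hprod⟩ := ih (h hij)
        refine ⟨i :: w', ?_, ?_⟩
        · simp only [List.length_cons] at hlen ⊢; omega
        · simp only [List.map_cons, List.prod_cons] at hprod ⊢
          rw [hprod]
      · rcases forbidden_prod i j hij with h1 | ⟨k, hk⟩
        · refine ⟨u, ?_, ?_⟩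
          · simp only [List.length_cons]; omega
          · simp only [List.map_cons, List.prod_cons, ← mul_assoc, h1, one_mul]
        · refine ⟨k :: u, ?_, ?_⟩
          · simp only [List.length_cons]; omega
          · simp only [List.map_cons, List.prod_cons, ← mul_assoc, hk]

lemma code_of_list : ∀ l : List G2, (∀ y ∈ l, y ∈ genS) →
    ∃ w : List (Fin 6), w.map ev = l := by
  intro l
  induction l with
  | nil => intro _; exact ⟨[], rfl⟩
  | cons y t ih =>
    intro hmem
    obtain ⟨w, hw⟩ := ih (fun z hz => hmem z (by simp [hz]))
    obtain ⟨i, hi⟩ := genS_eq_ev (hmem y (by simp))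
    exact ⟨i :: w, by rw [List.map_cons, hi, hw]⟩

lemma exists_geodesic (x : G2) : ∃ w : List (Fin 6),
    List.Chain' R w ∧ (w.map ev).prod = x ∧ w.length = wlen x := by
  obtain ⟨l, hlen, hmem, hprod⟩ := wlen_spec x
  obtain ⟨w, hw⟩ := code_of_list l hmem
  have hwlen : w.length = wlen x := by
    rw [← hlen, ← hw, List.length_map]
  have hwprod : (w.map ev).prod = x := by rw [hw, hprod]
  refine ⟨w, ?_, hwprod, hwlen⟩
  by_contra hch
  obtain ⟨w', hlt, hprod'⟩ := shorten w hch
  have h1 : wlen x ≤ w'.length := by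
    have := wlen_le (w'.map ev) ?_ (by rw [hprod', hwprod])
    · simpa using this
    · intro y hy
      obtain ⟨j, _, rfl⟩ := List.mem_map.mp hy
      exact ev_mem_genS j
  omega

lemma sphere_mem_D {x : G2} {m : ℕ} (hx : wlen x = m + 1) : x ∈ D m := by
  obtain ⟨w, hchain, hprod, hlen⟩ := exists_geodesic x
  rw [hx] at hlen
  have hne : w ≠ [] := by
    intro h; rw [h] at hlen; simp at hlen
  obtain ⟨i, ks, hik⟩ := encode_exists w hchain hne
  have hkslen : ks.length = m := by
    have := congrArg List.length hik
    rw [decode_length] at this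
    omega
  subst hkslen
  refine Finset.mem_image.mpr ⟨(i, ks.get), Finset.mem_univ _, ?_⟩
  rw [Pm]
  simp only
  rw [List.ofFn_get, hik, hprod]

lemma wlen_le_of_mem_D {x : G2} {m : ℕ} (hx : x ∈ D m) : wlen x ≤ m + 1 := by
  obtain ⟨⟨i, f⟩, -, rfl⟩ := Finset.mem_image.mp hx
  have h := wlen_le ((decode i (List.ofFn f)).map ev) ?_ rfl
  · simpa [Pm, decode_length] using h
  · intro y hy
    obtain ⟨j, _, rfl⟩ := List.mem_map.mp hy
    exact ev_mem_genS j

lemma wlen_one : wlen (1 : G2) = 0 :=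
  Nat.eq_zero_of_le_zero (wlen_le [] (by simp) rfl)

lemma wlen_eq_zero {x : G2} (h : wlen x = 0) : x = 1 := by
  obtain ⟨l, hl, -, hp⟩ := wlen_spec x
  rw [h, List.length_eq_zero_iff] at hl
  subst hl
  simpa using hp.symm

/-! ### Spheres -/

open Classical in
noncomputable def SF : ℕ → Finset G2
  | 0 => {1}
  | m + 1 => (D m).filter (fun x => wlen x = m + 1)

lemma mem_SF {x : G2} {n : ℕ} : x ∈ SF n ↔ wlen x = n := by
  cases n with
  | zero =>
    simp only [SF, Finset.mem_singleton]
    constructor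
    · rintro rfl; exact wlen_one
    · exact wlen_eq_zero
  | succ m =>
    simp only [SF]
    constructor
    · intro h
      exact (Finset.mem_filter.mp h).2
    · intro h
      exact Finset.mem_filter.mpr ⟨sphere_mem_D h, h⟩

lemma card_SF0 : (SF 0).card = 1 := rfl

lemma card_SF_le (m : ℕ) : (SF (m + 1)).card ≤ 6 * 4 ^ m := by
  calc (SF (m + 1)).card ≤ (D m).card := Finset.card_filter_le _ _
  _ = 6 * 4 ^ m := card_D m

lemma card_SF_le' (n : ℕ) : (SF n).card ≤ 6 * 4 ^ n := by
  cases n with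
  | zero => simp [card_SF0]
  | succ m =>
    calc (SF (m + 1)).card ≤ 6 * 4 ^ m := card_SF_le m
    _ ≤ 6 * 4 ^ (m + 1) := by
        have : (4:ℕ) ^ m ≤ 4 ^ (m+1) := Nat.pow_le_pow_right (by norm_num) (by omega)
        omega

lemma ball_bound : ∀ m, (∑ n ∈ Finset.range (m + 1), (SF n).card) + 1 ≤ 2 * 4 ^ m := by
  intro m
  induction m with
  | zero => simp [card_SF0]
  | succ m ih =>
    rw [Finset.sum_range_succ]
    have h2 := card_SF_le m
    have hp : (4:ℕ) ^ (m + 1) = 4 ^ m * 4 := pow_succ 4 m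
    omega

lemma card_SF_ge (m : ℕ) : 4 ^ (m + 1) ≤ (SF (m + 1)).card := by
  classical
  have hsplit := Finset.card_filter_add_card_filter_not
    (s := D m) (p := fun x => wlen x = m + 1)
  have hSF : (D m).filter (fun x => wlen x = m + 1) = SF (m + 1) := by
    ext x
    simp [SF, Finset.mem_filter]
  have hsub : (D m).filter (fun x => ¬ wlen x = m + 1) ⊆ (Finset.range (m + 1)).biUnion SF := by
    intro x hx
    rw [Finset.mem_filter] at hx
    obtain ⟨hxD, hne⟩ := hx
    have hle := wlen_le_of_mem_D hxD
    exact Finset.mem_biUnion.mpr ⟨wlen x, Finset.mem_range.mpr (by omega), mem_SF.mpr rfl⟩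
  have hcard2 : ((D m).filter (fun x => ¬ wlen x = m + 1)).card
      ≤ ∑ n ∈ Finset.range (m + 1), (SF n).card :=
    le_trans (Finset.card_le_card hsub) (Finset.card_biUnion_le)
  have hb := ball_bound m
  have hD := card_D m
  have hsplit' : (SF (m + 1)).card
      + ((D m).filter (fun x => ¬ wlen x = m + 1)).card = 6 * 4 ^ m := by
    rw [← hSF, ← hD]
    exact hsplit
  have hp : (4:ℕ) ^ (m + 1) = 4 ^ m * 4 := pow_succ 4 m
  omega

lemma card_SF_ge' (n : ℕ) : 4 ^ n ≤ (SF n).card := by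
  cases n with
  | zero => simp [card_SF0]
  | succ m => exact card_SF_ge m

lemma SF_disjoint : (↑(Finset.range (1 + 1)) : Set ℕ).PairwiseDisjoint SF := by
  intro a _ b _ hab
  simp only [Function.onFun, Finset.disjoint_left]
  intro x hxa hxb
  exact hab ((mem_SF.mp hxa).symm.trans (mem_SF.mp hxb))

lemma SF_pairwiseDisjoint (u : Finset ℕ) : (↑u : Set ℕ).PairwiseDisjoint SF := by
  intro a _ b _ hab
  simp only [Function.onFun, Finset.disjoint_left]
  intro x hxa hxb
  exact hab ((mem_SF.mp hxa).symm.trans (mem_SF.mp hxb))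

lemma sum_SF (s : ℝ) (n : ℕ) :
    ∑ x ∈ SF n, Real.exp (-s * wlen x) = ((SF n).card : ℝ) * Real.exp (-s * n) := by
  rw [Finset.sum_congr rfl (fun x hx => by rw [mem_SF.mp hx])]
  rw [Finset.sum_const, nsmul_eq_mul]

end FPaux

/-- For `F₂` with the generating set `{g, g⁻¹, h, h⁻¹, g·h⁻¹, h·g⁻¹}`, the Poincaré
series `Σ_x e^{-s|x|}` converges iff `s > ln 4`. -/
theorem freeGroup_two_poincare_series (s : ℝ) :
    Summable (fun x : FreeGroup (Fin 2) => Real.exp (-s * wlen x)) ↔ Real.log 4 < s := by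
  have h4 : (0:ℝ) < 4 := by norm_num
  have hnonneg : ∀ x : FreeGroup (Fin 2), 0 ≤ Real.exp (-s * wlen x) :=
    fun x => (Real.exp_pos _).le
  have hexp_pow : ∀ n : ℕ, Real.exp (-s * n) = Real.exp (-s) ^ n := by
    intro n
    rw [show -s * (n:ℝ) = (n:ℝ) * (-s) by ring, Real.exp_nat_mul]
  constructor
  · intro hsum
    by_contra hs
    push_neg at hs
    have key : ∀ N : ℕ, (N : ℝ) + 1 ≤ ∑' x : FreeGroup (Fin 2), Real.exp (-s * wlen x) := by
      intro N
      have hsub : ∑ x ∈ (Finset.range (N + 1)).biUnion FPaux.SF, Real.exp (-s * wlen x)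
          ≤ ∑' x : FreeGroup (Fin 2), Real.exp (-s * wlen x) :=
        Summable.sum_le_tsum _ (fun _ _ => hnonneg _) hsum
      refine le_trans ?_ hsub
      rw [Finset.sum_biUnion (FPaux.SF_pairwiseDisjoint _)]
      have hge : ∀ n ∈ Finset.range (N + 1),
          (1:ℝ) ≤ ∑ x ∈ FPaux.SF n, Real.exp (-s * wlen x) := by
        intro n _
        rw [FPaux.sum_SF s n]
        have hcard : ((4:ℝ) ^ n) ≤ ((FPaux.SF n).card : ℝ) := by
          have := FPaux.card_SF_ge' n
          exact_mod_cast this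
        have hexp : ((4:ℝ)⁻¹) ^ n ≤ Real.exp (-s * n) := by
          rw [hexp_pow n]
          apply pow_le_pow_left₀ (by positivity)
          rw [← Real.exp_log (show (0:ℝ) < 4⁻¹ by norm_num)]
          apply Real.exp_le_exp.mpr
          rw [Real.log_inv]
          linarith
        calc (1:ℝ) = 4 ^ n * (4⁻¹) ^ n := by
              rw [← mul_pow]
              norm_num
        _ ≤ ((FPaux.SF n).card : ℝ) * Real.exp (-s * n) := by
              apply mul_le_mul hcard hexp (by positivity) (by positivity)
      calc (N:ℝ) + 1 = ∑ _n ∈ Finset.range (N + 1), (1:ℝ) := by simp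
      _ ≤ _ := Finset.sum_le_sum hge
    obtain ⟨N, hN⟩ := exists_nat_gt (∑' x : FreeGroup (Fin 2), Real.exp (-s * wlen x))
    have := key N
    linarith
  · intro hs
    set r : ℝ := 4 * Real.exp (-s) with hr
    have hr0 : 0 ≤ r := by positivity
    have hr1 : r < 1 := by
      have h4s : (4:ℝ) < Real.exp s := by
        rw [← Real.exp_log h4]
        exact Real.exp_lt_exp.mpr hs
      rw [hr, Real.exp_neg]
      rw [mul_inv_lt_iff₀ (Real.exp_pos s)]
      linarith
    apply summable_of_sum_le (c := 6 * (1 - r)⁻¹) hnonneg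
    intro u
    set N := u.sup wlen with hN
    have husub : u ⊆ (Finset.range (N + 1)).biUnion FPaux.SF := by
      intro x hx
      refine Finset.mem_biUnion.mpr ⟨wlen x, ?_, FPaux.mem_SF.mpr rfl⟩
      exact Finset.mem_range.mpr (by
        have := Finset.le_sup (f := wlen) hx
        omega)
    calc ∑ x ∈ u, Real.exp (-s * wlen x)
        ≤ ∑ x ∈ (Finset.range (N + 1)).biUnion FPaux.SF, Real.exp (-s * wlen x) :=
          Finset.sum_le_sum_of_subset_of_nonneg husub (fun x _ _ => hnonneg x)
    _ = ∑ n ∈ Finset.range (N + 1), ∑ x ∈ FPaux.SF n, Real.exp (-s * wlen x) :=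
          Finset.sum_biUnion (FPaux.SF_pairwiseDisjoint _)
    _ ≤ ∑ n ∈ Finset.range (N + 1), 6 * r ^ n := by
          apply Finset.sum_le_sum
          intro n _
          rw [FPaux.sum_SF s n]
          have hcard : ((FPaux.SF n).card : ℝ) ≤ 6 * 4 ^ n := by
            have := FPaux.card_SF_le' n
            exact_mod_cast this
          calc ((FPaux.SF n).card : ℝ) * Real.exp (-s * n)
              ≤ (6 * 4 ^ n) * Real.exp (-s * n) := by
                apply mul_le_mul_of_nonneg_right hcard (by positivity)
          _ = 6 * r ^ n := by
                rw [hexp_pow n, hr, mul_pow]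
                ring
    _ = 6 * ∑ n ∈ Finset.range (N + 1), r ^ n := by rw [Finset.mul_sum]
    _ ≤ 6 * (1 - r)⁻¹ := by
          apply mul_le_mul_of_nonneg_left _ (by norm_num)
          calc ∑ n ∈ Finset.range (N + 1), r ^ n
              ≤ ∑' n : ℕ, r ^ n :=
                Summable.sum_le_tsum _ (fun i _ => by positivity)
                  (summable_geometric_of_lt_one hr0 hr1)
          _ = (1 - r)⁻¹ := tsum_geometric_of_lt_one hr0 hr1
end
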